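/- For every graph H on h ≥ 2 vertices and every n > h(h-1), i_H(n) > f(n,h): taking a balanced blowup H(n), one part has size at least h, and replacing the independent set on that part by an induced copy of H adds at least one induced copy of H while preserving all f(n,h) transversal copies. -/

import Mathlib

/-- Product of the part sizes of an equitable partition of n into h parts. -/
def fpart (n h : ℕ) : ℕ := ((n + h - 1) / h) ^ (n % h) * (n / h) ^ (h - n % h)

/-- The number of induced copies of H in G: the number of h-element vertex subsets of G
inducing a graph isomorphic to H. -/
noncomputable def inducedCopies {h n : ℕ} (H : SimpleGraph (Fin h))
    (G : SimpleGraph (Fin n)) : ℕ :=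
  Nat.card {s : Finset (Fin n) //
    s.card = h ∧ Nonempty (G.induce (s : Set (Fin n)) ≃g H)}

/-- i_H(n): the maximum number of induced copies of H over all n-vertex graphs. -/
noncomputable def maxInduced {h : ℕ} (n : ℕ) (H : SimpleGraph (Fin h)) : ℕ :=
  Finset.univ.sup fun G : SimpleGraph (Fin n) => inducedCopies H G

section Blow
variable {h n : ℕ}

def Gblow (hh : 0 < h) (H : SimpleGraph (Fin h)) : SimpleGraph (Fin n) where
  Adj u v :=
    ((u : ℕ) % h ≠ (v : ℕ) % h ∧
      H.Adj ⟨(u : ℕ) % h, Nat.mod_lt _ hh⟩ ⟨(v : ℕ) % h, Nat.mod_lt _ hh⟩) ∨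
    ((u : ℕ) % h = 0 ∧ (v : ℕ) % h = 0 ∧ (u : ℕ) < h * h ∧ (v : ℕ) < h * h ∧
      H.Adj ⟨(u : ℕ) / h % h, Nat.mod_lt _ hh⟩ ⟨(v : ℕ) / h % h, Nat.mod_lt _ hh⟩)
  symm := by
    refine ⟨fun u v huv => ?_⟩
    rcases huv with ⟨h1, h2⟩ | ⟨h1, h2, h3, h4, h5⟩
    · exact Or.inl ⟨Ne.symm h1, h2.symm⟩
    · exact Or.inr ⟨h2, h1, h4, h3, h5.symm⟩
  loopless := by
    refine ⟨fun u hu => ?_⟩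
    rcases hu with ⟨h1, _⟩ | ⟨_, _, _, _, h5⟩
    · exact h1 rfl
    · exact H.loopless.irrefl _ h5

lemma lemA (hh : 0 < h) {i : ℕ} (hi : i < h) (k : ℕ) :
    i + k * h < n ↔ k < n / h + (if i < n % h then 1 else 0) := by
  have hqr : n / h * h + n % h = n := Nat.div_add_mod' n h
  have hr : n % h < h := Nat.mod_lt _ hh
  constructor
  · intro hlt
    by_contra hk
    push_neg at hk
    split at hk
    · have : (n / h + 1) * h ≤ k * h := Nat.mul_le_mul_right h hk
      have : n / h * h + h ≤ k * h := by nlinarith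
      omega
    · have : (n / h) * h ≤ k * h := Nat.mul_le_mul_right h hk
      omega
  · intro hk
    split at hk
    · have : k * h ≤ n / h * h := Nat.mul_le_mul_right h (by omega)
      omega
    · have : (k + 1) * h ≤ n / h * h := Nat.mul_le_mul_right h hk
      have : k * h + h ≤ n / h * h := by nlinarith
      omega

lemma lemMod {i : ℕ} (hi : i < h) (k : ℕ) : (i + k * h) % h = i := by
  rw [Nat.add_mul_mod_self_right, Nat.mod_eq_of_lt hi]

lemma lemDiv (hh : 0 < h) {i : ℕ} (hi : i < h) (k : ℕ) : (i + k * h) / h = k := by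
  rw [Nat.add_mul_div_right _ _ hh, Nat.div_eq_of_lt hi, Nat.zero_add]

variable (H : SimpleGraph (Fin h))

/-- the type of "transversal codes" -/
abbrev Dc (h n : ℕ) := ∀ i : Fin h, Fin (n / h + if (i : ℕ) < n % h then 1 else 0)

def tvtx (hh : 0 < h) (g : Dc h n) (i : Fin h) : Fin n :=
  ⟨(i : ℕ) + (g i : ℕ) * h, (lemA hh i.isLt _).2 (g i).isLt⟩

def tset (hh : 0 < h) (g : Dc h n) : Finset (Fin n) :=
  Finset.image (tvtx hh g) Finset.univ

lemma tvtx_inj (hh : 0 < h) (g : Dc h n) : Function.Injective (tvtx hh g) := by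
  intro i j hij
  have := congrArg (fun v : Fin n => (v : ℕ) % h) hij
  simp only [tvtx] at this
  rw [lemMod i.isLt, lemMod j.isLt] at this
  exact Fin.ext this

lemma mem_tset (hh : 0 < h) (g : Dc h n) (v : Fin n) :
    v ∈ tset hh g ↔ ∃ i, tvtx hh g i = v := by
  simp [tset]

lemma tset_card (hh : 0 < h) (g : Dc h n) : (tset hh g).card = h := by
  rw [tset, Finset.card_image_of_injective _ (tvtx_inj hh g)]
  simp

lemma tvtx_mod (hh : 0 < h) (g : Dc h n) (i : Fin h) :
    ((tvtx hh g i : Fin n) : ℕ) % h = (i : ℕ) := lemMod i.isLt _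

lemma adj_tvtx (hh : 0 < h) (g : Dc h n) (i j : Fin h) :
    (Gblow hh H).Adj (tvtx hh g i) (tvtx hh g j) ↔ H.Adj i j := by
  show (_ ∧ _) ∨ (_ ∧ _ ∧ _ ∧ _ ∧ _) ↔ _
  constructor
  · rintro (⟨hne, hadj⟩ | ⟨h0, h0', hlt, hlt', hadj⟩)
    · convert hadj using 2 <;> exact (tvtx_mod hh g _).symm
    · exfalso
      rw [tvtx_mod hh g i] at h0
      rw [tvtx_mod hh g j] at h0'
      have hij : i = j := Fin.ext (by omega)
      subst hij
      exact H.loopless.irrefl _ hadj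
  · intro hadj
    have hij : i ≠ j := H.ne_of_adj hadj
    refine Or.inl ⟨?_, ?_⟩
    · rw [tvtx_mod hh g i, tvtx_mod hh g j]
      exact fun hc => hij (Fin.ext hc)
    · convert hadj using 2 <;> exact tvtx_mod hh g _

noncomputable def tset_iso (hh : 0 < h) (g : Dc h n) :
    (Gblow hh H).induce ((tset hh g : Finset (Fin n)) : Set (Fin n)) ≃g H := by
  refine ⟨Equiv.mk
    (fun x => ⟨(x : Fin n) % h, Nat.mod_lt _ hh⟩)
    (fun i => ⟨tvtx hh g i, by simp [mem_tset]⟩)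
    ?_ ?_, ?_⟩
  · rintro ⟨x, hx⟩
    obtain ⟨i, hi⟩ := (mem_tset hh g x).1 (by exact_mod_cast hx)
    subst hi
    simp only [Subtype.mk.injEq]
    congr 1
    exact Fin.ext (tvtx_mod hh g i)
  · intro i
    exact Fin.ext (tvtx_mod hh g i)
  · rintro ⟨x, hx⟩ ⟨y, hy⟩
    obtain ⟨i, hi⟩ := (mem_tset hh g x).1 (by exact_mod_cast hx)
    obtain ⟨j, hj⟩ := (mem_tset hh g y).1 (by exact_mod_cast hy)
    subst hi hj
    simp only [Equiv.coe_fn_mk, SimpleGraph.comap_adj, Function.Embedding.coe_subtype]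
    rw [show ((Gblow hh H).Adj (tvtx hh g i) (tvtx hh g j)) ↔ H.Adj i j from adj_tvtx H hh g i j]
    constructor
    · intro hadj
      convert hadj using 2 <;> exact (tvtx_mod hh g _).symm
    · intro hadj
      convert hadj using 2 <;> exact tvtx_mod hh g _

def svtx (hn : h * (h - 1) < n) (i : Fin h) : Fin n :=
  ⟨(i : ℕ) * h, by
    have h1 : (i : ℕ) ≤ h - 1 := by omega
    have h2 : (i : ℕ) * h ≤ (h - 1) * h := Nat.mul_le_mul_right h h1
    have h3 : (h - 1) * h = h * (h - 1) := Nat.mul_comm _ _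
    omega⟩

lemma svtx_mod (hn : h * (h - 1) < n) (i : Fin h) :
    ((svtx hn i : Fin n) : ℕ) % h = 0 := Nat.mul_mod_left _ _

lemma svtx_div (hh : 0 < h) (hn : h * (h - 1) < n) (i : Fin h) :
    ((svtx hn i : Fin n) : ℕ) / h = i := Nat.mul_div_cancel _ hh

lemma svtx_lt (hh : 0 < h) (hn : h * (h - 1) < n) (i : Fin h) :
    ((svtx hn i : Fin n) : ℕ) < h * h := by
  show (i : ℕ) * h < h * h
  exact (Nat.mul_lt_mul_right hh).2 i.isLt

lemma svtx_inj (hh : 0 < h) (hn : h * (h - 1) < n) : Function.Injective (svtx hn) := by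
  intro i j hij
  have := congrArg (fun v : Fin n => (v : ℕ) / h) hij
  simp only [svtx_div hh hn] at this
  exact Fin.ext this

def sset (hn : h * (h - 1) < n) : Finset (Fin n) := Finset.image (svtx hn) Finset.univ

lemma mem_sset (hn : h * (h - 1) < n) (v : Fin n) :
    v ∈ sset hn ↔ ∃ i, svtx hn i = v := by simp [sset]

lemma sset_card (hh : 0 < h) (hn : h * (h - 1) < n) : (sset hn).card = h := by
  rw [sset, Finset.card_image_of_injective _ (svtx_inj hh hn)]
  simp

lemma adj_svtx (hh : 0 < h) (hn : h * (h - 1) < n) (i j : Fin h) :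
    (Gblow hh H).Adj (svtx hn i) (svtx hn j) ↔ H.Adj i j := by
  show (_ ∧ _) ∨ (_ ∧ _ ∧ _ ∧ _ ∧ _) ↔ _
  constructor
  · rintro (⟨hne, hadj⟩ | ⟨h0, h0', hlt, hlt', hadj⟩)
    · exact absurd (by rw [svtx_mod hn i, svtx_mod hn j]) hne
    · convert hadj using 2 <;>
        · rw [svtx_div hh hn, Nat.mod_eq_of_lt (Fin.isLt _)]
  · intro hadj
    refine Or.inr ⟨svtx_mod hn i, svtx_mod hn j, svtx_lt hh hn i, svtx_lt hh hn j, ?_⟩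
    convert hadj using 2 <;>
      · rw [svtx_div hh hn, Nat.mod_eq_of_lt (Fin.isLt _)]

noncomputable def sset_iso (hh : 0 < h) (hn : h * (h - 1) < n) :
    (Gblow hh H).induce ((sset hn : Finset (Fin n)) : Set (Fin n)) ≃g H := by
  have key : ∀ i : Fin h,
      (⟨((svtx hn i : Fin n) : ℕ) / h % h, Nat.mod_lt _ hh⟩ : Fin h) = i := by
    intro i
    apply Fin.ext
    show ((svtx hn i : Fin n) : ℕ) / h % h = (i : ℕ)
    rw [svtx_div hh hn, Nat.mod_eq_of_lt i.isLt]
  refine ⟨Equiv.mk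
    (fun x => ⟨(x : Fin n) / h % h, Nat.mod_lt _ hh⟩)
    (fun i => ⟨svtx hn i, by simp [mem_sset]⟩)
    ?_ ?_, ?_⟩
  · rintro ⟨x, hx⟩
    obtain ⟨i, hi⟩ := (mem_sset hn x).1 (by exact_mod_cast hx)
    subst hi
    exact Subtype.ext (congrArg (svtx hn) (key i))
  · intro i
    exact key i
  · rintro ⟨x, hx⟩ ⟨y, hy⟩
    obtain ⟨i, hi⟩ := (mem_sset hn x).1 (by exact_mod_cast hx)
    obtain ⟨j, hj⟩ := (mem_sset hn y).1 (by exact_mod_cast hy)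
    subst hi hj
    simp only [Equiv.coe_fn_mk, SimpleGraph.comap_adj, Function.Embedding.coe_subtype]
    rw [key i, key j]
    exact (adj_svtx H hh hn i j).symm

lemma tset_inj (hh : 0 < h) : Function.Injective (tset (n := n) hh) := by
  intro g g' heq
  funext i
  have mi : tvtx hh g i ∈ tset hh g' := by
    rw [← heq]; exact (mem_tset hh g _).2 ⟨i, rfl⟩
  obtain ⟨j, hj⟩ := (mem_tset hh g' _).1 mi
  have e1 : (j : ℕ) = (i : ℕ) := by
    have := congrArg (fun v : Fin n => (v : ℕ) % h) hj
    simpa [tvtx_mod] using this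
  have e2 : (i : ℕ) + (g i : ℕ) * h = (j : ℕ) + (g' j : ℕ) * h :=
    (congrArg (fun v : Fin n => (v : ℕ)) hj).symm
  have hji : j = i := Fin.ext e1
  subst hji
  have h3 : (g j : ℕ) * h = (g' j : ℕ) * h := by omega
  exact Fin.ext (Nat.eq_of_mul_eq_mul_right hh h3)

lemma tset_ne_sset (hh : 0 < h) (hh2 : 2 ≤ h) (hn : h * (h - 1) < n) (g : Dc h n) :
    tset hh g ≠ sset hn := by
  intro heq
  have m0 : svtx hn ⟨0, hh⟩ ∈ tset hh g := by
    rw [heq]; exact (mem_sset hn _).2 ⟨_, rfl⟩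
  have m1 : svtx hn ⟨1, by omega⟩ ∈ tset hh g := by
    rw [heq]; exact (mem_sset hn _).2 ⟨_, rfl⟩
  obtain ⟨i, hi⟩ := (mem_tset hh g _).1 m0
  obtain ⟨j, hj⟩ := (mem_tset hh g _).1 m1
  have e1 : (i : ℕ) = 0 := by
    have := congrArg (fun v : Fin n => (v : ℕ) % h) hi
    simpa [tvtx_mod, svtx_mod] using this
  have e2 : (j : ℕ) = 0 := by
    have := congrArg (fun v : Fin n => (v : ℕ) % h) hj
    simpa [tvtx_mod, svtx_mod] using this
  have : i = j := Fin.ext (by omega)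
  rw [this, hj] at hi
  have := congrArg (fun v : Fin n => (v : ℕ)) hi
  simp only [svtx] at this
  omega

lemma fpart_eq' (hh : 0 < h) :
    ((n + h - 1) / h) ^ (n % h) * (n / h) ^ (h - n % h)
      = (n / h + 1) ^ (n % h) * (n / h) ^ (h - n % h) := by
  rcases Nat.eq_zero_or_pos (n % h) with h0 | h0
  · rw [h0]; simp
  · have hd : (n + h - 1) / h = n / h + 1 := by
      have h1 : n + h - 1 = n + (h - 1) := by omega
      rw [h1, Nat.add_div hh, Nat.div_eq_of_lt (by omega : h - 1 < h),
        Nat.mod_eq_of_lt (by omega : h - 1 < h), if_pos (by omega)]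
    rw [hd]

lemma card_Dc (hh : 0 < h) :
    Nat.card (Dc h n) = (n / h + 1) ^ (n % h) * (n / h) ^ (h - n % h) := by
  have hr : n % h < h := Nat.mod_lt _ hh
  rw [Nat.card_eq_fintype_card, Fintype.card_pi]
  simp only [Fintype.card_fin]
  rw [Fin.prod_univ_eq_prod_range (fun i => n / h + if i < n % h then 1 else 0) h]
  rw [Finset.range_eq_Ico, ← Finset.prod_Ico_consecutive _ (Nat.zero_le (n % h)) (le_of_lt hr)]
  congr 1
  · rw [Finset.prod_congr rfl (fun i hi => ?_), Finset.prod_const]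
    · rw [Nat.card_Ico, Nat.sub_zero]
    · rw [if_pos (Finset.mem_Ico.1 hi).2]
  · rw [Finset.prod_congr rfl (fun i hi => ?_), Finset.prod_const]
    · rw [Nat.card_Ico]
    · rw [if_neg (by have := (Finset.mem_Ico.1 hi).1; omega : ¬ i < n % h), Nat.add_zero]

end Blow

theorem stmt19' (h n : ℕ) (H : SimpleGraph (Fin h)) (hh2 : 2 ≤ h)
    (hn : h * (h - 1) < n) :
    ((n + h - 1) / h) ^ (n % h) * (n / h) ^ (h - n % h)
      < Finset.univ.sup (fun G : SimpleGraph (Fin n) =>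
          Nat.card {s : Finset (Fin n) //
            s.card = h ∧ Nonempty (G.induce (s : Set (Fin n)) ≃g H)}) := by
  have hh : 0 < h := by omega
  set G : SimpleGraph (Fin n) := Gblow hh H with hG
  set T := {s : Finset (Fin n) //
      s.card = h ∧ Nonempty (G.induce (s : Set (Fin n)) ≃g H)} with hT
  let F : Dc h n ⊕ Unit → T :=
    Sum.elim (fun g => ⟨tset hh g, tset_card hh g, ⟨tset_iso H hh g⟩⟩)
      (fun _ => ⟨sset hn, sset_card hh hn, ⟨sset_iso H hh hn⟩⟩)
  have Finj : Function.Injective F := by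
    rintro (g | ⟨⟩) (g' | ⟨⟩) hF
    · exact congrArg Sum.inl (tset_inj hh (congrArg Subtype.val hF))
    · exact absurd (congrArg Subtype.val hF) (tset_ne_sset hh hh2 hn g)
    · exact absurd (congrArg Subtype.val hF).symm (tset_ne_sset hh hh2 hn g')
    · rfl
  have hcard : Nat.card (Dc h n ⊕ Unit) ≤ Nat.card T :=
    Nat.card_le_card_of_injective F Finj
  rw [Nat.card_sum, card_Dc hh, Nat.card_unique] at hcard
  have h3 : Nat.card T ≤ Finset.univ.sup (fun G : SimpleGraph (Fin n) =>
      Nat.card {s : Finset (Fin n) //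
        s.card = h ∧ Nonempty (G.induce (s : Set (Fin n)) ≃g H)}) := by
    exact Finset.le_sup (f := fun G : SimpleGraph (Fin n) =>
      Nat.card {s : Finset (Fin n) //
        s.card = h ∧ Nonempty (G.induce (s : Set (Fin n)) ≃g H)}) (Finset.mem_univ G)
  have h4 := fpart_eq' (n := n) hh
  omega

/-- for every graph H on h ≥ 2 vertices and every n > h(h-1),
i_H(n) > f(n,h). -/
theorem stmt19 (h n : ℕ) (H : SimpleGraph (Fin h)) (hh : 2 ≤ h)
    (hn : h * (h - 1) < n) :
    fpart n h < maxInduced n H := by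
  simp only [fpart, maxInduced, inducedCopies]
  exact stmt19' h n H hh hn
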